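/- arXiv:2105.06999 — 2 statements merged into one kernel-verified Lean document; each statement's English description precedes it below -/
import Mathlib

section
/- Let G ≤ A be integrable random variables, K real, and define the adjusted strike K' = K - (E[A] - E[G]). Then the approximate price C̃ = e^{-rT}E[(G - K')^+] satisfies C_G ≤ C̃ ≤ C_G + e^{-rT}(E[A] - E[G]), where C_G = e^{-rT}E[(G-K)^+]. -/
open MeasureTheory

/-- With adjusted strike `K' = K - (E[A] - E[G])`, the approximate price
`C̃ = e^{-rT}E[(G-K')^+]` satisfies `C_G ≤ C̃ ≤ C_G + e^{-rT}(E[A] - E[G])`. -/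
theorem approximate_price_bounds {Ω : Type*} [MeasurableSpace Ω] (P : Measure Ω)
    [IsProbabilityMeasure P] (G A : Ω → ℝ) (hG : Integrable G P) (hA : Integrable A P)
    (hle : ∀ᵐ ω ∂P, G ω ≤ A ω) (K r T : ℝ) (hr : 0 ≤ r) (hT : 0 ≤ T) :
    Real.exp (-r * T) * ∫ ω, max (G ω - K) 0 ∂P ≤
        Real.exp (-r * T) *
          ∫ ω, max (G ω - (K - ((∫ ω, A ω ∂P) - ∫ ω, G ω ∂P))) 0 ∂P ∧
      Real.exp (-r * T) *
          (∫ ω, max (G ω - (K - ((∫ ω, A ω ∂P) - ∫ ω, G ω ∂P))) 0 ∂P) ≤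
        Real.exp (-r * T) * ∫ ω, max (G ω - K) 0 ∂P +
          Real.exp (-r * T) * ((∫ ω, A ω ∂P) - ∫ ω, G ω ∂P) := by
  set δ := (∫ ω, A ω ∂P) - ∫ ω, G ω ∂P with hδ
  have hδ0 : 0 ≤ δ := sub_nonneg.2 (integral_mono_ae hG hA hle)
  have hexp : (0:ℝ) ≤ Real.exp (-r * T) := (Real.exp_pos _).le
  have hint1 : Integrable (fun ω => max (G ω - K) 0) P :=
    (hG.sub (integrable_const K)).pos_part
  have hint2 : Integrable (fun ω => max (G ω - (K - δ)) 0) P :=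
    (hG.sub (integrable_const (K - δ))).pos_part
  have h1 : ∫ ω, max (G ω - K) 0 ∂P ≤ ∫ ω, max (G ω - (K - δ)) 0 ∂P := by
    refine integral_mono hint1 hint2 fun ω => ?_
    exact max_le_max (by linarith) le_rfl
  have h2 : ∫ ω, max (G ω - (K - δ)) 0 ∂P ≤ (∫ ω, max (G ω - K) 0 ∂P) + δ := by
    have : ∫ ω, max (G ω - (K - δ)) 0 ∂P ≤ ∫ ω, (max (G ω - K) 0 + δ) ∂P := by
      refine integral_mono hint2 (hint1.add (integrable_const δ)) fun ω => ?_
      rcases le_or_gt (G ω - (K - δ)) 0 with h | h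
      · rw [max_eq_right h]
        positivity
      · rw [max_eq_left h.le]
        rcases le_or_gt (G ω - K) 0 with h' | h'
        · rw [max_eq_right h']; linarith
        · rw [max_eq_left h'.le]; linarith
    rwa [integral_add hint1 (integrable_const δ), integral_const, probReal_univ,
      one_smul] at this
  constructor
  · exact mul_le_mul_of_nonneg_left h1 hexp
  · calc Real.exp (-r * T) * ∫ ω, max (G ω - (K - δ)) 0 ∂P
        ≤ Real.exp (-r * T) * ((∫ ω, max (G ω - K) 0 ∂P) + δ) :=
          mul_le_mul_of_nonneg_left h2 hexp
      _ = _ := by ring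
end

section
/- With G ≤ A integrable, K' = K - (E[A] - E[G]), C̃ = e^{-rT}E[(G-K')^+], and C_A = e^{-rT}E[(A-K)^+], the approximation error satisfies |C̃ - C_A| ≤ e^{-rT}(E[A] - E[G]). -/
open MeasureTheory

/-- The approximation error of the adjusted-strike price satisfies
`|C̃ - C_A| ≤ e^{-rT}(E[A] - E[G])`. -/
theorem approximate_price_error_bound {Ω : Type*} [MeasurableSpace Ω] (P : Measure Ω)
    [IsProbabilityMeasure P] (G A : Ω → ℝ) (hG : Integrable G P) (hA : Integrable A P)
    (hle : ∀ᵐ ω ∂P, G ω ≤ A ω) (K r T : ℝ) (hr : 0 ≤ r) (hT : 0 ≤ T) :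
    |Real.exp (-r * T) *
        (∫ ω, max (G ω - (K - ((∫ ω, A ω ∂P) - ∫ ω, G ω ∂P))) 0 ∂P) -
      Real.exp (-r * T) * ∫ ω, max (A ω - K) 0 ∂P| ≤
        Real.exp (-r * T) * ((∫ ω, A ω ∂P) - ∫ ω, G ω ∂P) := by
  set δ : ℝ := (∫ ω, A ω ∂P) - ∫ ω, G ω ∂P with hδ
  have hδ0 : 0 ≤ δ := sub_nonneg.mpr (integral_mono_ae hG hA hle)
  have hIG : Integrable (fun ω => max (G ω - (K - δ)) 0) P :=
    (hG.sub (integrable_const _)).pos_part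
  have hIA : Integrable (fun ω => max (A ω - K) 0) P :=
    (hA.sub (integrable_const _)).pos_part
  have hIA' : Integrable (fun ω => max (A ω - K) 0 + δ) P := hIA.add (integrable_const _)
  have hIG' : Integrable (fun ω => max (G ω - K) 0 + (A ω - G ω)) P :=
    ((hG.sub (integrable_const _)).pos_part).add (hA.sub hG)
  set X : ℝ := ∫ ω, max (G ω - (K - δ)) 0 ∂P with hX
  set Y : ℝ := ∫ ω, max (A ω - K) 0 ∂P with hY
  have h1 : X ≤ Y + δ := by
    have : X ≤ ∫ ω, (max (A ω - K) 0 + δ) ∂P := by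
      refine integral_mono_ae hIG hIA' ?_
      filter_upwards [hle] with ω h
      refine max_le ?_ (by positivity)
      have : G ω - (K - δ) ≤ (A ω - K) + δ := by linarith
      exact this.trans (by gcongr; exact le_max_left _ _)
    rwa [integral_add hIA (integrable_const _), integral_const, smul_eq_mul,
      probReal_univ, one_mul] at this
  have h2 : Y ≤ X + δ := by
    have step1 : Y ≤ ∫ ω, (max (G ω - K) 0 + (A ω - G ω)) ∂P := by
      refine integral_mono_ae hIA hIG' ?_
      filter_upwards [hle] with ω h
      refine max_le ?_ (add_nonneg (le_max_right _ _) (by linarith))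
      have : A ω - K ≤ (G ω - K) + (A ω - G ω) := by linarith
      exact this.trans (by gcongr; exact le_max_left _ _)
    have step2 : ∫ ω, (max (G ω - K) 0 + (A ω - G ω)) ∂P
        = (∫ ω, max (G ω - K) 0 ∂P) + δ := by
      rw [integral_add (f := fun ω => max (G ω - K) 0) (g := fun ω => A ω - G ω)
        ((hG.sub (integrable_const _)).pos_part) (hA.sub hG), integral_sub hA hG]
    have step3 : (∫ ω, max (G ω - K) 0 ∂P) ≤ X := by
      refine integral_mono_ae ((hG.sub (integrable_const _)).pos_part) hIG ?_
      filter_upwards with ω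
      exact max_le_max (by linarith) le_rfl
    calc Y ≤ _ := step1
    _ = _ := step2
    _ ≤ X + δ := by linarith
  rw [← mul_sub, abs_mul, abs_of_pos (Real.exp_pos _)]
  exact mul_le_mul_of_nonneg_left (abs_sub_le_iff.mpr ⟨by linarith, by linarith⟩)
    (Real.exp_pos _).le
end
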